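/- Let ℓ be a learning function with ℓ̲ = ℓ'(1), ℓ̄ = ℓ'(0) and L_Γ = ℓ̄ + 2ℓ̄³/ℓ̲, let V > 0, θ > 0, and fix q in the simplex Δ^{K−1}. Define the reduced-form output Y(x) = V·C(x,q)/(1 + θ·Γ(x⊙(1−x))) for x ∈ Δ^{K−1}, where Γ(z) = ‖z‖₁·λ(z/‖z‖₁) for z ≠ 0, Γ(0) = 0, and x⊙(1−x) has coordinates x_k(1−x_k). If θ < 1/(2L_Γ), then Y(x) ≤ Y(q) for every x ∈ Δ^{K−1}, with strict inequality whenever x ≠ q; that is, x = q is the unique maximizer of Y over Δ^{K−1}. -/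

import Mathlib

open Finset

noncomputable section

/-- The simplex Δ^{K-1}: nonnegative coordinates summing to 1. -/
def simplex (K : ℕ) : Set (Fin K → ℝ) :=
  {π | (∀ k, 0 ≤ π k) ∧ ∑ k, π k = 1}

/-- ℓ¹-norm on ℝ^K. -/
def l1 {K : ℕ} (a : Fin K → ℝ) : ℝ := ∑ k, |a k|

/-- Coverage operator C(a,b) = ∑ min(a_k, b_k). -/
def Cov {K : ℕ} (a b : Fin K → ℝ) : ℝ := ∑ k, min (a k) (b k)

/-- A learning function ℓ : [0,∞) → [0,∞): continuous, strictly increasing,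
strictly concave, ℓ(0)=0, ℓ(1)=1, continuously differentiable on [0,1]
with derivative `deriv`, ℓ'(1) > 0 (finiteness of ℓ'(0) is automatic). -/
structure LearningFunction where
  toFun : ℝ → ℝ
  deriv : ℝ → ℝ
  continuousOn : ContinuousOn toFun (Set.Ici 0)
  strictMonoOn : StrictMonoOn toFun (Set.Ici 0)
  strictConcaveOn : StrictConcaveOn ℝ (Set.Ici 0) toFun
  nonneg : ∀ s, 0 ≤ s → 0 ≤ toFun s
  map_zero : toFun 0 = 0
  map_one : toFun 1 = 1
  hasDerivAt : ∀ s ∈ Set.Icc (0:ℝ) 1,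
    HasDerivWithinAt toFun (deriv s) (Set.Icc (0:ℝ) 1) s
  derivContinuousOn : ContinuousOn deriv (Set.Icc (0:ℝ) 1)
  deriv_one_pos : 0 < deriv 1

/-- Maximal feasible scale H(π) = sup { H ≥ 0 : ∑ ℓ(H π_k) ≤ 1 }. -/
def Hscale {K : ℕ} (L : LearningFunction) (π : Fin K → ℝ) : ℝ :=
  sSup {H : ℝ | 0 ≤ H ∧ ∑ k, L.toFun (H * π k) ≤ 1}

/-- Relative inefficiency index λ(π) = 1/H(π). -/
def lam {K : ℕ} (L : LearningFunction) (π : Fin K → ℝ) : ℝ :=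
  1 / Hscale L π

/-- Γ(z) = ‖z‖₁ λ(z/‖z‖₁) for z ≠ 0, Γ(0) = 0. -/
def Gam {K : ℕ} (L : LearningFunction) (z : Fin K → ℝ) : ℝ :=
  if z = 0 then 0 else l1 z * lam L (fun k => z k / l1 z)

/-- Fragmentation index D(π) = 1 - ∑ π_k². -/
def Dfrag {K : ℕ} (π : Fin K → ℝ) : ℝ := 1 - ∑ k, (π k) ^ 2

/-- Lipschitz constant L_Γ = ℓ̄ + 2 ℓ̄³/ℓ̲. -/
def LGam (L : LearningFunction) : ℝ := L.deriv 0 + 2 * L.deriv 0 ^ 3 / L.deriv 1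

/-! ### Auxiliary lemmas about learning functions -/

namespace LearningFunction

variable (L : LearningFunction)

lemma concaveOn' : ConcaveOn ℝ (Set.Ici 0) L.toFun := L.strictConcaveOn.concaveOn

lemma concaveIcc : ConcaveOn ℝ (Set.Icc (0:ℝ) 1) L.toFun :=
  L.concaveOn'.subset Set.Icc_subset_Ici_self (convex_Icc 0 1)

lemma toFun_le_of_le_one {s : ℝ} (h0 : 0 ≤ s) (h1 : s ≤ 1) :
    L.toFun s ≤ L.deriv 0 * s := by
  rcases eq_or_lt_of_le h0 with rfl | hpos
  · simp [L.map_zero]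
  · have h := L.concaveIcc.slope_le_of_hasDerivWithinAt
      (Set.mem_Icc.mpr ⟨le_rfl, zero_le_one⟩) (Set.mem_Icc.mpr ⟨h0, h1⟩) hpos
      (L.hasDerivAt 0 (Set.mem_Icc.mpr ⟨le_rfl, zero_le_one⟩))
    rw [slope_def_field, L.map_zero, sub_zero, sub_zero] at h
    exact (div_le_iff₀ hpos).1 h

lemma one_le_deriv_zero : 1 ≤ L.deriv 0 := by
  have h := L.toFun_le_of_le_one zero_le_one le_rfl
  rw [L.map_one, mul_one] at h
  exact h

lemma deriv_zero_pos : 0 < L.deriv 0 := lt_of_lt_of_le one_pos L.one_le_deriv_zero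

lemma toFun_le {s : ℝ} (h0 : 0 ≤ s) : L.toFun s ≤ L.deriv 0 * s := by
  rcases le_or_gt s 1 with h1 | h1
  · exact L.toFun_le_of_le_one h0 h1
  · have h := L.concaveOn'.slope_anti_adjacent (Set.self_mem_Ici)
      (Set.mem_Ici.mpr (by linarith : (0:ℝ) ≤ s)) one_pos h1
    rw [L.map_zero, L.map_one] at h
    norm_num at h
    have hs1 : (0:ℝ) < s - 1 := by linarith
    have h2 : L.toFun s - 1 ≤ s - 1 := by
      have := (div_le_one hs1).1 h
      linarith
    have h3 : L.toFun s ≤ s := by linarith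
    nlinarith [L.one_le_deriv_zero]

lemma toFun_add_le {a b : ℝ} (ha : 0 ≤ a) (hb : 0 ≤ b) :
    L.toFun (a + b) ≤ L.toFun a + L.deriv 0 * b := by
  rcases eq_or_lt_of_le ha with rfl | ha'
  · rw [zero_add, L.map_zero, zero_add]
    exact L.toFun_le hb
  rcases eq_or_lt_of_le hb with rfl | hb'
  · simp
  · have hab : (0:ℝ) < a + b := by linarith
    have h1 := L.concaveOn'.2 (Set.mem_Ici.mpr hab.le) Set.self_mem_Ici
        (div_nonneg ha hab.le) (div_nonneg hb hab.le)
        (by rw [← add_div, div_self hab.ne'])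
    have h2 := L.concaveOn'.2 (Set.mem_Ici.mpr hab.le) Set.self_mem_Ici
        (div_nonneg hb hab.le) (div_nonneg ha hab.le)
        (by rw [← add_div, add_comm, div_self hab.ne'])
    simp only [smul_eq_mul, mul_zero, add_zero, L.map_zero] at h1 h2
    rw [div_mul_cancel₀ _ hab.ne'] at h1 h2
    have hsub : L.toFun (a + b) ≤ L.toFun a + L.toFun b := by
      have h3 := add_le_add h1 h2
      rw [← add_mul, ← add_div, div_self hab.ne', one_mul] at h3
      linarith
    have h4 := L.toFun_le hb
    linarith

lemma self_le_toFun {s : ℝ} (h0 : 0 ≤ s) (h1 : s ≤ 1) : s ≤ L.toFun s := by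
  have h := L.concaveOn'.2 (Set.mem_Ici.mpr zero_le_one) Set.self_mem_Ici h0
      (by linarith : 0 ≤ 1 - s) (by ring)
  simp only [smul_eq_mul, mul_one, mul_zero, add_zero, L.map_one, L.map_zero] at h
  linarith

lemma arg_le_one {t : ℝ} (h0 : 0 ≤ t) (h : L.toFun t ≤ 1) : t ≤ 1 := by
  by_contra h'
  push_neg at h'
  have := L.strictMonoOn (Set.mem_Ici.mpr zero_le_one) (Set.mem_Ici.mpr h0) h'
  rw [L.map_one] at this
  linarith

lemma deriv_one_mul_le {s t : ℝ} (h0 : 0 ≤ s) (hst : s ≤ t) (ht : t ≤ 1) :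
    L.deriv 1 * (t - s) ≤ L.toFun t - L.toFun s := by
  rcases eq_or_lt_of_le hst with rfl | h
  · simp
  have hsI : s ∈ Set.Icc (0:ℝ) 1 := ⟨h0, hst.trans ht⟩
  have htI : t ∈ Set.Icc (0:ℝ) 1 := ⟨h0.trans hst, ht⟩
  have h1I : (1:ℝ) ∈ Set.Icc (0:ℝ) 1 := ⟨zero_le_one, le_rfl⟩
  have hslope : L.deriv 1 ≤ (L.toFun t - L.toFun s) / (t - s) := by
    rcases eq_or_lt_of_le ht with rfl | ht1
    · have h2 := L.concaveIcc.le_slope_of_hasDerivWithinAt hsI h1I h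
        (L.hasDerivAt 1 h1I)
      rwa [slope_def_field] at h2
    · have h1 := L.concaveIcc.le_slope_of_hasDerivWithinAt hsI h1I (h.trans ht1)
        (L.hasDerivAt 1 h1I)
      have h2 := (L.concaveIcc.slope_anti hsI)
        (Set.mem_diff_singleton.mpr ⟨htI, h.ne'⟩)
        (Set.mem_diff_singleton.mpr ⟨h1I, (h.trans ht1).ne'⟩) ht
      rw [slope_def_field] at h1 h2
      rw [slope_def_field] at h2
      exact h1.trans h2
  have := (le_div_iff₀ (by linarith : (0:ℝ) < t - s)).1 hslope
  linarith

end LearningFunction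

/-! ### Auxiliary lemmas about Hscale and Gam -/

def feasSet {K : ℕ} (L : LearningFunction) (z : Fin K → ℝ) : Set ℝ :=
  {H : ℝ | 0 ≤ H ∧ ∑ k, L.toFun (H * z k) ≤ 1}

lemma Hscale_eq_sSup {K : ℕ} (L : LearningFunction) (z : Fin K → ℝ) :
    Hscale L z = sSup (feasSet L z) := rfl

lemma zero_mem_feas {K : ℕ} (L : LearningFunction) (z : Fin K → ℝ) :
    (0:ℝ) ∈ feasSet L z := by
  refine ⟨le_rfl, ?_⟩
  simp [L.map_zero]

section HscaleLemmas

variable {K : ℕ} (L : LearningFunction) {z w : Fin K → ℝ}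

lemma sum_pos_of_ne_zero (hz : ∀ k, 0 ≤ z k) (hz0 : z ≠ 0) : 0 < ∑ k, z k := by
  obtain ⟨k, hk⟩ := Function.ne_iff.1 hz0
  have hk' : 0 < z k := lt_of_le_of_ne (hz k) (by simpa using (Ne.symm hk))
  exact lt_of_lt_of_le hk' (Finset.single_le_sum (fun j _ => hz j) (Finset.mem_univ k))

lemma feas_mul_le (hz : ∀ k, 0 ≤ z k) {H : ℝ} (hH : H ∈ feasSet L z) (k : Fin K) :
    H * z k ≤ 1 := by
  refine L.arg_le_one (mul_nonneg hH.1 (hz k)) ?_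
  exact le_trans (Finset.single_le_sum
    (fun j _ => L.nonneg _ (mul_nonneg hH.1 (hz j))) (Finset.mem_univ k)) hH.2

lemma feas_mul_sum_le (hz : ∀ k, 0 ≤ z k) {H : ℝ} (hH : H ∈ feasSet L z) :
    H * ∑ k, z k ≤ 1 := by
  calc H * ∑ k, z k = ∑ k, H * z k := by rw [Finset.mul_sum]
    _ ≤ ∑ k, L.toFun (H * z k) := Finset.sum_le_sum fun k _ =>
        L.self_le_toFun (mul_nonneg hH.1 (hz k)) (feas_mul_le L hz hH k)
    _ ≤ 1 := hH.2

lemma bddAbove_feas (hz : ∀ k, 0 ≤ z k) (hz0 : z ≠ 0) : BddAbove (feasSet L z) := by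
  refine ⟨1 / ∑ k, z k, fun H hH => ?_⟩
  rw [le_div_iff₀ (sum_pos_of_ne_zero hz hz0)]
  exact feas_mul_sum_le L hz hH

lemma inv_mem_feas (hz : ∀ k, 0 ≤ z k) (hz0 : z ≠ 0) :
    1 / (L.deriv 0 * ∑ k, z k) ∈ feasSet L z := by
  have hn : 0 < ∑ k, z k := sum_pos_of_ne_zero hz hz0
  have hlb : 0 < L.deriv 0 := L.deriv_zero_pos
  have hH0 : (0:ℝ) ≤ 1 / (L.deriv 0 * ∑ k, z k) := by positivity
  refine ⟨hH0, ?_⟩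
  calc ∑ k, L.toFun (1 / (L.deriv 0 * ∑ j, z j) * z k)
      ≤ ∑ k, L.deriv 0 * (1 / (L.deriv 0 * ∑ j, z j) * z k) :=
        Finset.sum_le_sum fun k _ => L.toFun_le (mul_nonneg hH0 (hz k))
    _ = L.deriv 0 * (1 / (L.deriv 0 * ∑ j, z j) * ∑ k, z k) := by
        rw [← Finset.mul_sum, ← Finset.mul_sum]
    _ = 1 := by field_simp

lemma Hscale_pos (hz : ∀ k, 0 ≤ z k) (hz0 : z ≠ 0) : 0 < Hscale L z := by
  have hn : 0 < ∑ k, z k := sum_pos_of_ne_zero hz hz0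
  have hlb : 0 < L.deriv 0 := L.deriv_zero_pos
  have h := le_csSup (bddAbove_feas L hz hz0) (inv_mem_feas L hz hz0)
  have : (0:ℝ) < 1 / (L.deriv 0 * ∑ k, z k) := by positivity
  exact lt_of_lt_of_le this h

lemma Hscale_le (hz : ∀ k, 0 ≤ z k) (hz0 : z ≠ 0) : Hscale L z ≤ 1 / ∑ k, z k := by
  refine csSup_le ⟨0, zero_mem_feas L z⟩ fun H hH => ?_
  rw [le_div_iff₀ (sum_pos_of_ne_zero hz hz0)]
  exact feas_mul_sum_le L hz hH

lemma Hscale_ge (hz : ∀ k, 0 ≤ z k) (hz0 : z ≠ 0) :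
    1 / (L.deriv 0 * ∑ k, z k) ≤ Hscale L z :=
  le_csSup (bddAbove_feas L hz hz0) (inv_mem_feas L hz hz0)

lemma l1_eq_sum (hz : ∀ k, 0 ≤ z k) : l1 z = ∑ k, z k :=
  Finset.sum_congr rfl fun k _ => abs_of_nonneg (hz k)

lemma Hscale_smul (hz : ∀ k, 0 ≤ z k) (hz0 : z ≠ 0) :
    Hscale L (fun k => z k / ∑ j, z j) = (∑ j, z j) * Hscale L z := by
  set n := ∑ j, z j with hn
  have hnpos : 0 < n := sum_pos_of_ne_zero hz hz0
  have hlub : IsLUB (feasSet L z) (Hscale L z) :=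
    isLUB_csSup ⟨0, zero_mem_feas L z⟩ (bddAbove_feas L hz hz0)
  have hmain : IsLUB (feasSet L (fun k => z k / n)) (n * Hscale L z) := by
    constructor
    · rintro H ⟨hH0, hHsum⟩
      have hmem : H / n ∈ feasSet L z := by
        refine ⟨div_nonneg hH0 hnpos.le, ?_⟩
        have e : ∑ k, L.toFun (H / n * z k) = ∑ k, L.toFun (H * (z k / n)) :=
          Finset.sum_congr rfl fun k _ => by rw [div_mul_eq_mul_div, mul_div_assoc]
        rw [e]
        exact hHsum
      have := hlub.1 hmem
      rw [div_le_iff₀ hnpos] at this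
      linarith [this]
    · intro b hb
      have hb' : Hscale L z ≤ b / n := by
        refine hlub.2 fun H hH => ?_
        have hmem : n * H ∈ feasSet L (fun k => z k / n) := by
          refine ⟨mul_nonneg hnpos.le hH.1, ?_⟩
          have e : ∑ k, L.toFun (n * H * (z k / n)) = ∑ k, L.toFun (H * z k) :=
            Finset.sum_congr rfl fun k _ => by
              rw [show n * H * (z k / n) = H * z k by field_simp]
          rw [e]
          exact hH.2
        have hnb := hb hmem
        rw [le_div_iff₀ hnpos]
        linarith [hnb]
      have := mul_le_mul_of_nonneg_left hb' hnpos.le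
      calc n * Hscale L z ≤ n * (b / n) := this
        _ = b := by field_simp
  rw [Hscale_eq_sSup]
  exact hmain.csSup_eq ⟨0, zero_mem_feas L _⟩

lemma Gam_eq (hz : ∀ k, 0 ≤ z k) (hz0 : z ≠ 0) : Gam L z = 1 / Hscale L z := by
  have hn : 0 < ∑ k, z k := sum_pos_of_ne_zero hz hz0
  have hHs : 0 < Hscale L z := Hscale_pos L hz hz0
  simp only [Gam, lam, if_neg hz0, l1_eq_sum hz]
  rw [Hscale_smul L hz hz0]
  rw [one_div, mul_inv, ← mul_assoc, mul_inv_cancel₀ hn.ne', one_mul, one_div]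

lemma Gam_nonneg (hz : ∀ k, 0 ≤ z k) : 0 ≤ Gam L z := by
  by_cases h : z = 0
  · simp [Gam, h]
  · rw [Gam_eq L hz h]
    exact le_of_lt (one_div_pos.2 (Hscale_pos L hz h))

lemma Gam_le (hz : ∀ k, 0 ≤ z k) (hz0 : z ≠ 0) :
    Gam L z ≤ L.deriv 0 * ∑ k, z k := by
  have hn : 0 < ∑ k, z k := sum_pos_of_ne_zero hz hz0
  have hlb : 0 < L.deriv 0 := L.deriv_zero_pos
  rw [Gam_eq L hz hz0]
  have h1 := Hscale_ge L hz hz0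
  have h2 := one_div_le_one_div_of_le (by positivity) h1
  rwa [one_div_one_div] at h2

lemma Gam_ge (hz : ∀ k, 0 ≤ z k) (hz0 : z ≠ 0) :
    (∑ k, z k) ≤ Gam L z := by
  rw [Gam_eq L hz hz0]
  have h1 := Hscale_le L hz hz0
  have h2 := one_div_le_one_div_of_le (Hscale_pos L hz hz0) h1
  rwa [one_div_one_div] at h2

lemma Hscale_anti (hz : ∀ k, 0 ≤ z k) (hzw : ∀ k, z k ≤ w k) (hz0 : z ≠ 0) :
    Hscale L w ≤ Hscale L z := by
  refine csSup_le_csSup (bddAbove_feas L hz hz0) ⟨0, zero_mem_feas L w⟩ ?_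
  rintro H ⟨hH0, hHs⟩
  refine ⟨hH0, le_trans (Finset.sum_le_sum fun k _ => ?_) hHs⟩
  exact L.strictMonoOn.monotoneOn (Set.mem_Ici.mpr (mul_nonneg hH0 (hz k)))
    (Set.mem_Ici.mpr (mul_nonneg hH0 ((hz k).trans (hzw k))))
    (mul_le_mul_of_nonneg_left (hzw k) hH0)

lemma Gam_mono (hz : ∀ k, 0 ≤ z k) (hzw : ∀ k, z k ≤ w k) :
    Gam L z ≤ Gam L w := by
  have hw : ∀ k, 0 ≤ w k := fun k => (hz k).trans (hzw k)
  by_cases h : z = 0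
  · rw [h]
    simp only [Gam, if_pos rfl]
    exact Gam_nonneg L hw
  · have hw0 : w ≠ 0 := by
      intro hw0
      apply h
      funext k
      have h1 := congrFun hw0 k
      simp only [Pi.zero_apply] at h1 ⊢
      have := hzw k
      rw [h1] at this
      linarith [hz k]
    rw [Gam_eq L hz h, Gam_eq L hw hw0]
    exact one_div_le_one_div_of_le (Hscale_pos L hw hw0) (Hscale_anti L hz hzw h)

lemma LGam_pos : 0 < LGam L := by
  have h1 := L.one_le_deriv_zero
  have h2 := L.deriv_one_pos
  have h3 : 0 < 2 * L.deriv 0 ^ 3 / L.deriv 1 := by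
    apply div_pos _ h2
    nlinarith [pow_pos (show (0:ℝ) < L.deriv 0 by linarith) 3]
  unfold LGam
  linarith

lemma deriv_zero_le_LGam : L.deriv 0 ≤ LGam L := by
  have h1 := L.one_le_deriv_zero
  have h2 := L.deriv_one_pos
  have h3 : 0 ≤ 2 * L.deriv 0 ^ 3 / L.deriv 1 := by
    apply div_nonneg _ h2.le
    nlinarith [pow_pos (show (0:ℝ) < L.deriv 0 by linarith) 3]
  unfold LGam
  linarith

set_option maxHeartbeats 1000000 in
lemma Gam_add_le (δ : Fin K → ℝ) (hz : ∀ k, 0 ≤ z k) (hδ : ∀ k, 0 ≤ δ k) :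
    Gam L (fun k => z k + δ k) ≤ Gam L z + LGam L * ∑ k, δ k := by
  have hlb1 : 1 ≤ L.deriv 0 := L.one_le_deriv_zero
  have hlb : 0 < L.deriv 0 := L.deriv_zero_pos
  have hlo : 0 < L.deriv 1 := L.deriv_one_pos
  have hmsum : 0 ≤ ∑ k, δ k := Finset.sum_nonneg fun k _ => hδ k
  have hw : ∀ k, 0 ≤ z k + δ k := fun k => add_nonneg (hz k) (hδ k)
  by_cases hz0 : z = 0
  · subst hz0
    have hGz : Gam L (0 : Fin K → ℝ) = 0 := by simp [Gam]
    have hgoal : Gam L δ ≤ LGam L * ∑ k, δ k := by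
      by_cases hδ0 : δ = 0
      · subst hδ0
        simp [Gam]
      · have h1 := Gam_le L (z := δ) hδ hδ0
        have h2 : L.deriv 0 * ∑ k, δ k ≤ LGam L * ∑ k, δ k :=
          mul_le_mul_of_nonneg_right (deriv_zero_le_LGam L) hmsum
        exact h1.trans h2
    calc Gam L (fun k => (0 : Fin K → ℝ) k + δ k) = Gam L δ := by
          simp only [Pi.zero_apply, zero_add]
      _ ≤ LGam L * ∑ k, δ k := hgoal
      _ = Gam L (0 : Fin K → ℝ) + LGam L * ∑ k, δ k := by rw [hGz, zero_add]
  · have hn' : 0 < ∑ k, z k := sum_pos_of_ne_zero hz hz0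
    obtain ⟨n, hn_def⟩ : ∃ n, n = ∑ k, z k := ⟨_, rfl⟩
    obtain ⟨m, hm_def⟩ : ∃ m, m = ∑ k, δ k := ⟨_, rfl⟩
    rw [← hm_def]
    have hn : 0 < n := by rw [hn_def]; exact hn'
    have hm : 0 ≤ m := by rw [hm_def]; exact hmsum
    have hw0 : (fun k => z k + δ k) ≠ 0 := by
      intro h
      apply hz0
      funext k
      have h1 := congrFun h k
      simp only [Pi.zero_apply] at h1 ⊢
      have := hδ k
      have := hz k
      linarith
    have hsumw : ∑ k, (z k + δ k) = n + m := by
      rw [Finset.sum_add_distrib, ← hn_def, ← hm_def]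
    by_cases hcase : 2 * L.deriv 0 * m ≤ L.deriv 1 * n
    · -- Case A: small perturbation relative to n
      obtain ⟨ε, hε_def⟩ : ∃ e, e = L.deriv 0 * m / (L.deriv 1 * n) := ⟨_, rfl⟩
      have hε0 : 0 ≤ ε := by
        rw [hε_def]; positivity
      have hεhalf : ε ≤ 1/2 := by
        rw [hε_def, div_le_iff₀ (by positivity : (0:ℝ) < L.deriv 1 * n)]
        nlinarith
      have hε1 : (0:ℝ) < 1 - ε := by linarith
      have hεn : L.deriv 1 * ε * n = L.deriv 0 * m := by
        rw [hε_def]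
        field_simp
      have hfeas : ∀ H ∈ feasSet L z, (1 - ε) * H ∈ feasSet L (fun k => z k + δ k) := by
        rintro H ⟨hH0, hHs⟩
        have hk1 : ∀ k, H * z k ≤ 1 := feas_mul_le L hz ⟨hH0, hHs⟩
        refine ⟨mul_nonneg hε1.le hH0, ?_⟩
        have step1 : ∀ k, L.toFun ((1 - ε) * H * (z k + δ k)) ≤
            L.toFun (H * z k) - L.deriv 1 * ε * H * z k + L.deriv 0 * ((1 - ε) * H) * δ k := by
          intro k
          have e1 : (1 - ε) * H * (z k + δ k) = (1 - ε) * H * z k + (1 - ε) * H * δ k := by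
            ring
          have hnn1 : 0 ≤ (1 - ε) * H * z k :=
            mul_nonneg (mul_nonneg hε1.le hH0) (hz k)
          have hnn2 : 0 ≤ (1 - ε) * H * δ k :=
            mul_nonneg (mul_nonneg hε1.le hH0) (hδ k)
          have h1 : L.toFun ((1 - ε) * H * z k + (1 - ε) * H * δ k) ≤
              L.toFun ((1 - ε) * H * z k) + L.deriv 0 * ((1 - ε) * H * δ k) :=
            L.toFun_add_le hnn1 hnn2
          have h2 : L.toFun ((1 - ε) * H * z k) ≤
              L.toFun (H * z k) - L.deriv 1 * ε * H * z k := by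
            have hle : (1 - ε) * H * z k ≤ H * z k := by
              nlinarith [mul_nonneg hH0 (hz k)]
            have h3 := L.deriv_one_mul_le hnn1 hle (hk1 k)
            have e2 : H * z k - (1 - ε) * H * z k = ε * (H * z k) := by ring
            rw [e2] at h3
            nlinarith
          rw [e1]
          calc L.toFun ((1 - ε) * H * z k + (1 - ε) * H * δ k)
              ≤ L.toFun ((1 - ε) * H * z k) + L.deriv 0 * ((1 - ε) * H * δ k) := h1
            _ ≤ L.toFun (H * z k) - L.deriv 1 * ε * H * z k
                + L.deriv 0 * ((1 - ε) * H) * δ k := by nlinarith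
        have hsum2 : ∑ k, L.toFun ((1 - ε) * H * (z k + δ k)) ≤
            ∑ k, (L.toFun (H * z k) - L.deriv 1 * ε * H * z k
              + L.deriv 0 * ((1 - ε) * H) * δ k) :=
          Finset.sum_le_sum fun k _ => step1 k
        have hA : ∑ k, L.deriv 1 * ε * H * z k = L.deriv 1 * ε * H * n := by
          rw [← Finset.mul_sum, ← hn_def]
        have hB : ∑ k, L.deriv 0 * ((1 - ε) * H) * δ k
            = L.deriv 0 * ((1 - ε) * H) * m := by
          rw [← Finset.mul_sum, ← hm_def]
        have hRHS : ∑ k, (L.toFun (H * z k) - L.deriv 1 * ε * H * z k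
              + L.deriv 0 * ((1 - ε) * H) * δ k)
            = (∑ k, L.toFun (H * z k)) - L.deriv 1 * ε * H * n
              + L.deriv 0 * ((1 - ε) * H) * m := by
          rw [Finset.sum_add_distrib, Finset.sum_sub_distrib, hA, hB]
        have hεnH : L.deriv 1 * ε * H * n = L.deriv 0 * m * H := by
          have e : L.deriv 1 * ε * H * n = L.deriv 1 * ε * n * H := by ring
          rw [e, hεn]
        have hfinal : (∑ k, L.toFun (H * z k)) - L.deriv 1 * ε * H * n
            + L.deriv 0 * ((1 - ε) * H) * m ≤ 1 := by
          nlinarith [mul_nonneg (mul_nonneg (mul_nonneg hε0 hlb.le) hH0) hm]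
        calc ∑ k, L.toFun ((1 - ε) * H * (z k + δ k))
            ≤ _ := hsum2
          _ = _ := hRHS
          _ ≤ 1 := hfinal
      have hHsup : (1 - ε) * Hscale L z ≤ Hscale L (fun k => z k + δ k) := by
        have hb : ∀ H ∈ feasSet L z, H ≤ Hscale L (fun k => z k + δ k) / (1 - ε) := by
          intro H hH
          have h1 := le_csSup (bddAbove_feas L hw hw0) (hfeas H hH)
          rw [le_div_iff₀ hε1]
          calc H * (1 - ε) = (1 - ε) * H := mul_comm _ _
            _ ≤ _ := h1
        have h2 := csSup_le ⟨0, zero_mem_feas L z⟩ hb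
        rw [le_div_iff₀ hε1] at h2
        calc (1 - ε) * Hscale L z = Hscale L z * (1 - ε) := mul_comm _ _
          _ ≤ _ := h2
      have hHz := Hscale_pos L hz hz0
      have hHw := Hscale_pos L hw hw0
      rw [Gam_eq L hw hw0, Gam_eq L hz hz0]
      have h1 : 1 / Hscale L (fun k => z k + δ k) ≤ 1 / ((1 - ε) * Hscale L z) :=
        one_div_le_one_div_of_le (mul_pos hε1 hHz) hHsup
      have h2 : 1 / ((1 - ε) * Hscale L z) = (1 / Hscale L z) * (1 / (1 - ε)) := by
        rw [mul_comm, one_div, mul_inv]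
        rw [← one_div, ← one_div]
      have h3 : 1 / (1 - ε) ≤ 1 + 2 * ε := by
        rw [div_le_iff₀ hε1]
        nlinarith
      have hG_le : 1 / Hscale L z ≤ L.deriv 0 * n := by
        have h0 := Gam_le L hz hz0
        rw [Gam_eq L hz hz0] at h0
        rw [hn_def]
        exact h0
      have hg0 : 0 ≤ 1 / Hscale L z := (one_div_pos.2 hHz).le
      have h4 : (1 / Hscale L z) * (1 / (1 - ε)) ≤ (1 / Hscale L z) * (1 + 2 * ε) :=
        mul_le_mul_of_nonneg_left h3 hg0
      have h5 : (1 / Hscale L z) * (1 + 2 * ε) = 1 / Hscale L z + (1 / Hscale L z) * (2 * ε) := by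
        ring
      have h6 : (1 / Hscale L z) * (2 * ε) ≤ (L.deriv 0 * n) * (2 * ε) :=
        mul_le_mul_of_nonneg_right hG_le (by linarith : (0:ℝ) ≤ 2 * ε)
      have h7 : (L.deriv 0 * n) * (2 * ε) = 2 * L.deriv 0 ^ 2 * m / L.deriv 1 := by
        rw [hε_def]
        field_simp [hlo.ne', hn.ne']
      have h8 : 2 * L.deriv 0 ^ 2 * m / L.deriv 1 ≤ LGam L * m := by
        have h9 : 2 * L.deriv 0 ^ 2 * m ≤ 2 * L.deriv 0 ^ 3 * m := by
          nlinarith [mul_nonneg hm (mul_nonneg hlb.le hlb.le)]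
        have h10 : 2 * L.deriv 0 ^ 2 * m / L.deriv 1 ≤ 2 * L.deriv 0 ^ 3 * m / L.deriv 1 :=
          (div_le_div_iff_of_pos_right hlo).2 h9
        have h11 : LGam L * m = L.deriv 0 * m + 2 * L.deriv 0 ^ 3 / L.deriv 1 * m := by
          unfold LGam; ring
        have h12 : 2 * L.deriv 0 ^ 3 * m / L.deriv 1 = 2 * L.deriv 0 ^ 3 / L.deriv 1 * m := by
          ring
        have h13 : 0 ≤ L.deriv 0 * m := mul_nonneg hlb.le hm
        linarith
      calc 1 / Hscale L (fun k => z k + δ k)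
          ≤ 1 / ((1 - ε) * Hscale L z) := h1
        _ = (1 / Hscale L z) * (1 / (1 - ε)) := h2
        _ ≤ (1 / Hscale L z) * (1 + 2 * ε) := h4
        _ = 1 / Hscale L z + (1 / Hscale L z) * (2 * ε) := h5
        _ ≤ 1 / Hscale L z + (L.deriv 0 * n) * (2 * ε) := by linarith
        _ = 1 / Hscale L z + 2 * L.deriv 0 ^ 2 * m / L.deriv 1 := by rw [h7]
        _ ≤ 1 / Hscale L z + LGam L * m := by linarith
    · -- Case B: large perturbation
      rw [not_le] at hcase
      have h1 : Gam L (fun k => z k + δ k) ≤ L.deriv 0 * (n + m) := by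
        have := Gam_le L hw hw0
        rwa [hsumw] at this
      have h2 : n ≤ Gam L z := by rw [hn_def]; exact Gam_ge L hz hz0
      have hkey : (L.deriv 0 - 1) * n ≤ 2 * L.deriv 0 ^ 3 * m / L.deriv 1 := by
        rw [le_div_iff₀ hlo]
        have hc := hcase.le
        nlinarith [mul_le_mul_of_nonneg_left hc (by linarith : (0:ℝ) ≤ L.deriv 0 - 1),
          mul_nonneg hm hlb.le, sq_nonneg (L.deriv 0 - 1)]
      have h11 : LGam L * m = L.deriv 0 * m + 2 * L.deriv 0 ^ 3 / L.deriv 1 * m := by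
        unfold LGam; ring
      have h12 : 2 * L.deriv 0 ^ 3 * m / L.deriv 1 = 2 * L.deriv 0 ^ 3 / L.deriv 1 * m := by
        ring
      nlinarith

lemma Gam_lip (hz : ∀ k, 0 ≤ z k) (hw : ∀ k, 0 ≤ w k) :
    Gam L w ≤ Gam L z + LGam L * ∑ k, |w k - z k| := by
  have h1 : Gam L w ≤ Gam L (fun k => z k + (max (z k) (w k) - z k)) := by
    refine Gam_mono L hw fun k => ?_
    rw [add_sub_cancel]
    exact le_max_right _ _
  have h2 := Gam_add_le L (fun k => max (z k) (w k) - z k) hz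
    (fun k => sub_nonneg.2 (le_max_left _ _))
  have h3 : ∑ k, (max (z k) (w k) - z k) ≤ ∑ k, |w k - z k| := by
    refine Finset.sum_le_sum fun k _ => ?_
    rcases le_total (w k) (z k) with h | h
    · rw [max_eq_left h]
      simp [abs_nonneg]
    · rw [max_eq_right h, abs_of_nonneg (sub_nonneg.2 h)]
  have hLG0 : 0 ≤ LGam L := (LGam_pos L).le
  have h4 := mul_le_mul_of_nonneg_left h3 hLG0
  linarith

end HscaleLemmas

/-- Productive optimum: if θ < 1/(2 L_Γ), then x = q uniquely maximizes the
reduced-form output Y(x) = V·C(x,q)/(1 + θ·Γ(x⊙(1-x))) over the simplex. -/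
theorem reduced_form_output_unique_max {K : ℕ} (L : LearningFunction)
    (V θ : ℝ) (hV : 0 < V) (hθ : 0 < θ)
    (q : Fin K → ℝ) (hq : q ∈ simplex K)
    (hθ' : θ < 1 / (2 * LGam L)) :
    ∀ x ∈ simplex K,
      V * Cov x q / (1 + θ * Gam L (fun k => x k * (1 - x k))) ≤
        V * Cov q q / (1 + θ * Gam L (fun k => q k * (1 - q k))) ∧
      (x ≠ q →
        V * Cov x q / (1 + θ * Gam L (fun k => x k * (1 - x k))) <
          V * Cov q q / (1 + θ * Gam L (fun k => q k * (1 - q k)))) := by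
  intro x hx
  obtain ⟨hx0, hx1⟩ := hx
  obtain ⟨hq0, hq1⟩ := hq
  have hxle : ∀ k, x k ≤ 1 := fun k =>
    le_trans (Finset.single_le_sum (fun j _ => hx0 j) (Finset.mem_univ k)) (le_of_eq hx1)
  have hqle : ∀ k, q k ≤ 1 := fun k =>
    le_trans (Finset.single_le_sum (fun j _ => hq0 j) (Finset.mem_univ k)) (le_of_eq hq1)
  have hzx : ∀ k, 0 ≤ x k * (1 - x k) := fun k =>
    mul_nonneg (hx0 k) (sub_nonneg.2 (hxle k))
  have hzq : ∀ k, 0 ≤ q k * (1 - q k) := fun k =>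
    mul_nonneg (hq0 k) (sub_nonneg.2 (hqle k))
  set d := ∑ k, |x k - q k| with hd_def
  have hd0 : 0 ≤ d := Finset.sum_nonneg fun k _ => abs_nonneg _
  have hGx0 : 0 ≤ Gam L (fun k => x k * (1 - x k)) := Gam_nonneg L hzx
  have hGq0 : 0 ≤ Gam L (fun k => q k * (1 - q k)) := Gam_nonneg L hzq
  have hLG : 0 < LGam L := LGam_pos L
  have hlip := Gam_lip L (z := fun k => x k * (1 - x k)) (w := fun k => q k * (1 - q k))
    hzx hzq
  have habs : ∑ k, |q k * (1 - q k) - x k * (1 - x k)| ≤ d := by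
    refine Finset.sum_le_sum fun k _ => ?_
    have e : q k * (1 - q k) - x k * (1 - x k) = (q k - x k) * (1 - q k - x k) := by ring
    rw [e, abs_mul]
    have h1 : |1 - q k - x k| ≤ 1 := by
      rw [abs_le]
      constructor
      · have := hqle k; have := hxle k; linarith
      · have := hq0 k; have := hx0 k; linarith
    calc |q k - x k| * |1 - q k - x k| ≤ |q k - x k| * 1 :=
          mul_le_mul_of_nonneg_left h1 (abs_nonneg _)
      _ = |x k - q k| := by rw [mul_one, abs_sub_comm]
  have hGam_chain : Gam L (fun k => q k * (1 - q k)) ≤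
      Gam L (fun k => x k * (1 - x k)) + LGam L * d := by
    have h2 := mul_le_mul_of_nonneg_left habs hLG.le
    linarith
  have hCxq : Cov x q = 1 - d / 2 := by
    unfold Cov
    have hmin : ∀ k, min (x k) (q k) = (x k + q k - |x k - q k|) / 2 := by
      intro k
      rcases le_total (x k) (q k) with h | h
      · rw [min_eq_left h, abs_of_nonpos (by linarith)]
        ring
      · rw [min_eq_right h, abs_of_nonneg (by linarith)]
        ring
    rw [Finset.sum_congr rfl fun k _ => hmin k, ← Finset.sum_div,
      Finset.sum_sub_distrib, Finset.sum_add_distrib, hx1, hq1, ← hd_def]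
    ring
  have hCqq : Cov q q = 1 := by
    unfold Cov
    simp only [min_self]
    exact hq1
  have hθL : θ * (2 * LGam L) < 1 := by
    rw [← lt_div_iff₀ (by positivity : (0:ℝ) < 2 * LGam L)]
    exact hθ'
  have hA : 0 < 1 + θ * Gam L (fun k => x k * (1 - x k)) := by
    have := mul_nonneg hθ.le hGx0
    linarith
  have hB : 0 < 1 + θ * Gam L (fun k => q k * (1 - q k)) := by
    have := mul_nonneg hθ.le hGq0
    linarith
  have hkey : Cov x q * (1 + θ * Gam L (fun k => q k * (1 - q k))) ≤
      1 + θ * Gam L (fun k => x k * (1 - x k)) := by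
    rw [hCxq]
    nlinarith [mul_nonneg hθ.le hGq0,
      mul_le_mul_of_nonneg_left hGam_chain hθ.le,
      mul_nonneg hd0 (mul_nonneg hθ.le hGq0),
      mul_le_mul_of_nonneg_left hθL.le hd0]
  constructor
  · rw [div_le_div_iff₀ hA hB, hCqq]
    nlinarith [mul_le_mul_of_nonneg_left hkey hV.le]
  · intro hne
    have hdpos : 0 < d := by
      obtain ⟨k, hk⟩ := Function.ne_iff.1 hne
      have h1 : 0 < |x k - q k| := abs_pos.2 (sub_ne_zero.2 hk)
      have h2 : |x k - q k| ≤ ∑ j, |x j - q j| := Finset.single_le_sum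
        (f := fun j => |x j - q j|) (fun j _ => abs_nonneg _) (Finset.mem_univ k)
      rw [hd_def]
      exact lt_of_lt_of_le h1 h2
    have hkey' : Cov x q * (1 + θ * Gam L (fun k => q k * (1 - q k))) <
        1 + θ * Gam L (fun k => x k * (1 - x k)) := by
      rw [hCxq]
      nlinarith [mul_nonneg hθ.le hGq0,
        mul_le_mul_of_nonneg_left hGam_chain hθ.le,
        mul_nonneg hd0 (mul_nonneg hθ.le hGq0),
        mul_pos hdpos (by linarith : (0:ℝ) < 1 - θ * (2 * LGam L))]
    rw [div_lt_div_iff₀ hA hB, hCqq]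
    nlinarith [mul_lt_mul_of_pos_left hkey' hV]

end
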